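/- Let G ⇉ M be a Lie groupoid with compact unit space M, let Γ = T*G ⇉ A*G be its symplectic cotangent groupoid, and let p = p₀ ∘ r_Γ where p₀ : A*G \ 0 → ℝ is C^∞ and homogeneous of degree 1, with complete Hamiltonian flow χ_t on T*G \ ker r_Γ. Setting Λ_t = χ_t(A*G \ 0), one has the one-parameter group relation Λ_{t₁} · Λ_{t₂} = Λ_{t₁ + t₂} for all t₁, t₂ ∈ ℝ, where · denotes the set of products in the groupoid Γ of composable pairs of elements of Λ_{t₁} and Λ_{t₂}. -/
import Mathlib


/-- **The one-parameter group relation `Λ_{t₁} · Λ_{t₂} = Λ_{t₁+t₂}` for the Lagrangian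
submanifolds generated by the Hamiltonian flow of a right-invariant symbol in the cotangent
groupoid.**
Let `Γ = T*G ⇉ A*G` be the symplectic cotangent groupoid of a Lie groupoid `G ⇉ M` (with
compact `M`), described abstractly by its set of units `U = A*G`, its source and range maps
`s, r : Γ → U ⊆ Γ` and its partially defined multiplication `mul`.  Let
`χ : ℝ → Γ → Γ` be the (complete) Hamiltonian flow of `p = p₀ ∘ r_Γ`, where `p₀` is `C^∞`
homogeneous of degree 1 on `A*G ∖ 0`.  The flow satisfies `s_Γ ∘ χ_t = s_Γ` (it moves along
the `s_Γ`-fibers) and is right-invariant: `χ_t(δ₁ δ₂) = χ_t(δ₁) δ₂`.  Let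
`Λ₀ = A*G ∖ 0 ⊆ U` (invariant in the sense that `r_Γ(χ_t(u)) ∈ Λ₀` for `u ∈ Λ₀`, i.e. the
flow stays in `T*G ∖ (ker r_Γ ∪ ker s_Γ)`), and set `Λ_t = χ_t(Λ₀)`.
Then for all `t₁, t₂ ∈ ℝ` : `Λ_{t₁} · Λ_{t₂} = Λ_{t₁+t₂}`, where the product is the set of
groupoid products of composable pairs. -/
theorem stmt_13 {Γ : Type*}
    (U : Set Γ)                 -- the units `A*G ⊆ T*G`
    (s r : Γ → Γ)               -- source and range of the cotangent groupoid
    (mul : Γ → Γ → Γ)           -- multiplication (meaningful on composable pairs)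
    (hsU : ∀ δ, s δ ∈ U) (hrU : ∀ δ, r δ ∈ U)
    (hs_unit : ∀ u ∈ U, s u = u) (hr_unit : ∀ u ∈ U, r u = u)
    (hmul_unit_left : ∀ δ, mul (r δ) δ = δ)
    (hmul_unit_right : ∀ δ, mul δ (s δ) = δ)
    (hs_mul : ∀ δ₁ δ₂, s δ₁ = r δ₂ → s (mul δ₁ δ₂) = s δ₂)
    (hr_mul : ∀ δ₁ δ₂, s δ₁ = r δ₂ → r (mul δ₁ δ₂) = r δ₁)
    -- the Hamiltonian flow `χ` of `p = p₀ ∘ r_Γ`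
    (χ : ℝ → Γ → Γ)
    (hχ0 : ∀ δ, χ 0 δ = δ)
    (hχgrp : ∀ t₁ t₂ : ℝ, ∀ δ, χ (t₁ + t₂) δ = χ t₁ (χ t₂ δ))
    -- the flow moves along the `s_Γ`-fibers
    (hχs : ∀ (t : ℝ) (δ), s (χ t δ) = s δ)
    -- right-invariance of the flow
    (hχinv : ∀ (t : ℝ) (δ₁ δ₂), s δ₁ = r δ₂ → χ t (mul δ₁ δ₂) = mul (χ t δ₁) δ₂)
    -- `Λ₀ = A*G ∖ 0`
    (Λ₀ : Set Γ) (hΛ₀ : Λ₀ ⊆ U)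
    -- the flow stays in `T*G ∖ (ker r_Γ ∪ ker s_Γ)`
    (hrΛ : ∀ (t : ℝ), ∀ u ∈ Λ₀, r (χ t u) ∈ Λ₀)
    (t₁ t₂ : ℝ) :
    {δ : Γ | ∃ δ₁ ∈ χ t₁ '' Λ₀, ∃ δ₂ ∈ χ t₂ '' Λ₀, s δ₁ = r δ₂ ∧ δ = mul δ₁ δ₂}
      = χ (t₁ + t₂) '' Λ₀ := by
  ext δ
  constructor
  · rintro ⟨δ₁, ⟨u₁, hu₁, rfl⟩, δ₂, ⟨u₂, hu₂, rfl⟩, hcomp, rfl⟩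
    have hu₁U : s u₁ = u₁ := hs_unit u₁ (hΛ₀ hu₁)
    have h1 : s u₁ = r (χ t₂ u₂) := by rw [← hχs t₁ u₁]; exact hcomp
    have : mul (χ t₁ u₁) (χ t₂ u₂) = χ t₁ (mul u₁ (χ t₂ u₂)) := (hχinv t₁ u₁ (χ t₂ u₂) h1).symm
    rw [this]
    have : mul u₁ (χ t₂ u₂) = χ t₂ u₂ := by
      rw [hu₁U] at h1; rw [h1]; exact hmul_unit_left _
    rw [this, ← hχgrp]
    exact ⟨u₂, hu₂, rfl⟩
  · rintro ⟨u, hu, rfl⟩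
    set u₁ := r (χ t₂ u) with hu₁def
    have hu₁Λ : u₁ ∈ Λ₀ := hrΛ t₂ u hu
    have hcomp : s (χ t₁ u₁) = r (χ t₂ u) := by
      rw [hχs, hs_unit u₁ (hΛ₀ hu₁Λ)]
    refine ⟨χ t₁ u₁, ⟨u₁, hu₁Λ, rfl⟩, χ t₂ u, ⟨u, hu, rfl⟩, hcomp, ?_⟩
    have h1 : s u₁ = r (χ t₂ u) := hs_unit u₁ (hΛ₀ hu₁Λ)
    rw [← hχinv t₁ u₁ (χ t₂ u) h1, hu₁def, hmul_unit_left, ← hχgrp]
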